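/- Let G be a bounded open subset of ℂⁿ, let z ∈ G, and let t ≥ 0. Then there exists a function f : ℂⁿ → ℂ, holomorphic on G, such that ∫_G |f(w)|² e^{−t‖w‖} dV(w) ≤ vol(G) and |f(z)|² = e^{t‖z‖}. -/

import Mathlib

open MeasureTheory Metric

noncomputable instance (n : ℕ) : MeasureSpace (EuclideanSpace ℂ (Fin n)) :=
  { volume := Measure.map (MeasurableEquiv.toLp 2 (Fin n → ℂ)) (volume : Measure (Fin n → ℂ)) }

instance (n : ℕ) :
    IsFiniteMeasureOnCompacts (volume : Measure (EuclideanSpace ℂ (Fin n))) :=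
  ⟨fun K hK => by
    show Measure.map _ _ K < ⊤
    rw [MeasurableEquiv.map_apply]
    have h2 : IsCompact ((MeasurableEquiv.toLp 2 (Fin n → ℂ)) ⁻¹' K) := by
      convert hK.image (PiLp.continuous_ofLp (p := 2) (β := fun _ : Fin n => ℂ)) using 1
      ext x
      simp
      exact ⟨fun h => ⟨_, h, rfl⟩, by rintro ⟨y, hy, rfl⟩; exact hy⟩
    exact h2.measure_lt_top⟩

theorem weighted_bergman_aux (n : ℕ)
    (G : Set (EuclideanSpace ℂ (Fin n))) (hG : IsOpen G)
    (hGb : Bornology.IsBounded G) (z : EuclideanSpace ℂ (Fin n))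
    (t : ℝ) (ht : 0 ≤ t) (g : EuclideanSpace ℂ (Fin n) →L[ℂ] ℂ)
    (hg : ∀ w, (g w).re ≤ ‖w‖) (hgz : (g z).re = ‖z‖) :
    ∃ f : EuclideanSpace ℂ (Fin n) → ℂ, DifferentiableOn ℂ f G ∧
      IntegrableOn (fun w => ‖f w‖ ^ 2 * Real.exp (-t * ‖w‖)) G ∧
      (∫ w in G, ‖f w‖ ^ 2 * Real.exp (-t * ‖w‖)) ≤ (volume G).toReal ∧
      ‖f z‖ ^ 2 = Real.exp (t * ‖z‖) := by
  set f : EuclideanSpace ℂ (Fin n) → ℂ :=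
    fun w => Complex.exp (((t / 2 : ℝ) : ℂ) * g w) with hf
  have hkey : ∀ w, ‖f w‖ ^ 2 = Real.exp (t * (g w).re) := by
    intro w
    have h : (((t / 2 : ℝ) : ℂ) * g w).re = t / 2 * (g w).re := by
      simp [Complex.mul_re]
    rw [hf, Complex.norm_exp, h, sq, ← Real.exp_add]
    ring_nf
  have hfin : volume G ≠ ⊤ := hGb.measure_lt_top.ne
  have : IsFiniteMeasure (volume.restrict G) :=
    ⟨by simpa [Measure.restrict_apply_univ] using hGb.measure_lt_top⟩
  have hcont : Continuous fun w => ‖f w‖ ^ 2 * Real.exp (-t * ‖w‖) := by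
    apply Continuous.mul
    · exact ((continuous_norm.comp
        ((continuous_const.mul g.continuous).cexp)).pow 2)
    · exact (continuous_const.mul continuous_norm).rexp
  have hbound : ∀ w, ‖f w‖ ^ 2 * Real.exp (-t * ‖w‖) ≤ 1 := by
    intro w
    rw [hkey, ← Real.exp_add]
    have : t * (g w).re + -t * ‖w‖ ≤ 0 := by
      have := mul_le_mul_of_nonneg_left (hg w) ht
      linarith
    simpa using Real.exp_le_one_iff.mpr this
  have hnonneg : ∀ w, 0 ≤ ‖f w‖ ^ 2 * Real.exp (-t * ‖w‖) := fun w =>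
    mul_nonneg (by positivity) (Real.exp_pos _).le
  have hint : IntegrableOn (fun w => ‖f w‖ ^ 2 * Real.exp (-t * ‖w‖)) G := by
    apply Integrable.mono' (integrable_const (1 : ℝ))
      (hcont.aestronglyMeasurable.restrict)
    exact Filter.Eventually.of_forall fun w => by
      rw [Real.norm_eq_abs, abs_of_nonneg (hnonneg w)]; exact hbound w
  refine ⟨f, ?_, hint, ?_, ?_⟩
  · exact ((differentiable_const _).mul g.differentiable).cexp.differentiableOn
  · calc (∫ w in G, ‖f w‖ ^ 2 * Real.exp (-t * ‖w‖))
        ≤ ∫ _ in G, (1 : ℝ) :=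
          setIntegral_mono_on hint (integrable_const 1) hG.measurableSet
            fun w _ => hbound w
      _ = (volume G).toReal := by simp [Measure.real]
  · rw [hkey, hgz]

/-- Lower estimate for the weighted Bergman space: if `G ⊆ ℂⁿ` is bounded
and open, `z ∈ G`, and `t ≥ 0`, then there is a holomorphic `f` on `G` with
`∫_G |f|² e^{-t‖w‖} dV ≤ vol(G)` and `|f z|² = e^{t‖z‖}`. -/
theorem weighted_bergman_lower_estimate (n : ℕ)
    (G : Set (EuclideanSpace ℂ (Fin n))) (hG : IsOpen G)
    (hGb : Bornology.IsBounded G) (z : EuclideanSpace ℂ (Fin n)) (hz : z ∈ G)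
    (t : ℝ) (ht : 0 ≤ t) :
    ∃ f : EuclideanSpace ℂ (Fin n) → ℂ, DifferentiableOn ℂ f G ∧
      IntegrableOn (fun w => ‖f w‖ ^ 2 * Real.exp (-t * ‖w‖)) G ∧
      (∫ w in G, ‖f w‖ ^ 2 * Real.exp (-t * ‖w‖)) ≤ (volume G).toReal ∧
      ‖f z‖ ^ 2 = Real.exp (t * ‖z‖) := by
  rcases eq_or_ne z 0 with rfl | hz0
  · exact weighted_bergman_aux n G hG hGb 0 t ht 0 (fun w => by simp) (by simp)
  · have hz' : (0 : ℝ) < ‖z‖ := norm_pos_iff.mpr hz0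
    refine weighted_bergman_aux n G hG hGb z t ht ((‖z‖⁻¹ : ℂ) • innerSL ℂ z) ?_ ?_
    · intro w
      have h1 : (((‖z‖⁻¹ : ℂ) • innerSL ℂ z) w).re ≤
          ‖((‖z‖⁻¹ : ℂ) • innerSL ℂ z) w‖ := Complex.re_le_norm _
      refine h1.trans ?_
      simp only [ContinuousLinearMap.smul_apply, smul_eq_mul, norm_mul]
      have h2 : ‖(innerSL ℂ z) w‖ ≤ ‖z‖ * ‖w‖ := by
        simpa using norm_inner_le_norm (𝕜 := ℂ) z w
      have h3 : ‖(‖z‖⁻¹ : ℂ)‖ = ‖z‖⁻¹ := by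
        simp [abs_of_nonneg (inv_nonneg.mpr hz'.le)]
      rw [h3]
      calc ‖z‖⁻¹ * ‖(innerSL ℂ z) w‖ ≤ ‖z‖⁻¹ * (‖z‖ * ‖w‖) :=
            mul_le_mul_of_nonneg_left h2 (inv_nonneg.mpr hz'.le)
        _ = ‖w‖ := by field_simp
    · have : (innerSL ℂ z) z = ((‖z‖ : ℂ))^2 := by
        simp [innerSL_apply_apply, inner_self_eq_norm_sq_to_K]
      simp only [ContinuousLinearMap.smul_apply, this, smul_eq_mul]
      have hzc : (‖z‖ : ℂ) ≠ 0 := by simpa using hz'.ne'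
      rw [show (‖z‖ : ℂ)⁻¹ * (‖z‖:ℂ)^2 = (‖z‖ : ℂ) by field_simp]
      simp
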